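/- Let (C, S, W) be a category with strong and weak equivalences such that the localisation functor γ' : C[S⁻¹] → C[W⁻¹] admits a left adjoint λ. Then (C, S, W) is a left Cartan-Eilenberg category, and for each object X the counit ε'_X : λγ'(X) → X exhibits λγ'(X) as a cofibrant left model of X. -/

import Mathlib

open CategoryTheory

universe v u

variable {C : Type u} [Category.{v} C]

/-- `(C, S, W)` is a category with strong and weak equivalences. -/
structure StrongWeak (S W : MorphismProperty C) : Prop where
  comp_S : ∀ ⦃X Y Z : C⦄ (f : X ⟶ Y) (g : Y ⟶ Z), S f → S g → S (f ≫ g)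
  comp_W : ∀ ⦃X Y Z : C⦄ (f : X ⟶ Y) (g : Y ⟶ Z), W f → W g → W (f ≫ g)
  iso_S : ∀ ⦃X Y : C⦄ (f : X ⟶ Y), IsIso f → S f
  iso_W : ∀ ⦃X Y : C⦄ (f : X ⟶ Y), IsIso f → W f
  le_sat : ∀ ⦃X Y : C⦄ (f : X ⟶ Y), S f → IsIso (W.Q.map f)

/-- An object of `C[S⁻¹]` is `(S, W)`-cofibrant if for every `w : Y ⟶ X` in `W`,
composition with `w` induces a bijection on morphisms from it in `C[S⁻¹]`. -/
def CofibrantLoc (S W : MorphismProperty C) (M : S.Localization) : Prop :=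
  ∀ ⦃Y X : C⦄ (w : Y ⟶ X), W w →
    Function.Bijective (fun g : M ⟶ S.Q.obj Y => g ≫ S.Q.map w)

/-- The canonical functor `γ' : C[S⁻¹] ⥤ C[W⁻¹]`. -/
noncomputable def gammaPrime (S W : MorphismProperty C)
    (h : ∀ ⦃X Y : C⦄ (f : X ⟶ Y), S f → IsIso (W.Q.map f)) :
    S.Localization ⥤ W.Localization :=
  Localization.Construction.lift W.Q (fun _ _ f hf => h f hf)

section Aux

variable (S W : MorphismProperty C)
  (h : ∀ ⦃X Y : C⦄ (f : X ⟶ Y), S f → IsIso (W.Q.map f))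
  (lam : W.Localization ⥤ S.Localization)
  (adj : lam ⊣ gammaPrime S W h)

lemma gamma_fac : S.Q ⋙ gammaPrime S W h = W.Q :=
  Localization.Construction.fac _ _

lemma gamma_obj (c : C) : (gammaPrime S W h).obj (S.Q.obj c) = W.Q.obj c :=
  Functor.congr_obj (gamma_fac S W h) c

lemma gamma_map {c c' : C} (f : c ⟶ c') :
    (gammaPrime S W h).map (S.Q.map f) =
      eqToHom (gamma_obj S W h c) ≫ W.Q.map f ≫ eqToHom (gamma_obj S W h c').symm :=
  Functor.congr_hom (gamma_fac S W h) f

lemma gamma_map_isIso {c c' : C} (f : c ⟶ c') (hf : W f) :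
    IsIso ((gammaPrime S W h).map (S.Q.map f)) := by
  rw [gamma_map S W h f]
  have : IsIso (W.Q.map f) := Localization.inverts W.Q W f hf
  infer_instance

/-- The key hom equivalence. -/
noncomputable def eAux (d : W.Localization) (c : C) :
    (d ⟶ W.Q.obj c) ≃ (lam.obj d ⟶ S.Q.obj c) :=
  (Iso.homCongr (Iso.refl d) (eqToIso (gamma_obj S W h c).symm)).trans
    (adj.homEquiv d (S.Q.obj c)).symm

lemma eAux_comp {d d' : W.Localization} (f : d ⟶ d') {c : C} (g : d' ⟶ W.Q.obj c) :
    eAux S W h lam adj d c (f ≫ g) = lam.map f ≫ eAux S W h lam adj d' c g := by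
  simp [eAux, Adjunction.homEquiv_naturality_left_symm]

lemma eAux_nat (d : W.Localization) {c c' : C} (f : c ⟶ c') (g : d ⟶ W.Q.obj c) :
    eAux S W h lam adj d c' (g ≫ W.Q.map f) = eAux S W h lam adj d c g ≫ S.Q.map f := by
  have hW : W.Q.map f = eqToHom (gamma_obj S W h c).symm ≫
      (gammaPrime S W h).map (S.Q.map f) ≫ eqToHom (gamma_obj S W h c') := by
    rw [gamma_map S W h f]; simp
  simp only [eAux, Equiv.trans_apply, Iso.homCongr_apply, Iso.refl_inv, eqToIso.hom,
    Category.id_comp, Category.assoc]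
  rw [hW]
  simp only [eqToHom_trans, eqToHom_refl, Category.comp_id, Category.id_comp, Category.assoc]
  simpa only [Category.assoc] using adj.homEquiv_naturality_right_symm (Y := S.Q.obj c) (g ≫ eqToHom (gamma_obj S W h c).symm) (S.Q.map f)

end Aux

section FF

variable (S W : MorphismProperty C)
  (h : ∀ ⦃X Y : C⦄ (f : X ⟶ Y), S f → IsIso (W.Q.map f))
  (lam : W.Localization ⥤ S.Localization)

lemma lam_faithful (adj : lam ⊣ gammaPrime S W h) : lam.Faithful where
  map_injective := by
    intro d d' f₁ f₂ hf
    have key : ∀ (c : C) (g : d' ⟶ W.Q.obj c), f₁ ≫ g = f₂ ≫ g := by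
      intro c g
      apply (eAux S W h lam adj d c).injective
      rw [eAux_comp, eAux_comp, hf]
    have hw : Functor.whiskerLeft W.Q (coyoneda.map f₁.op) = Functor.whiskerLeft W.Q (coyoneda.map f₂.op) := by
      ext c g
      exact key c g
    have := Localization.faithful_whiskeringLeft W.Q W (Type (max u v))
    have h2 : coyoneda.map f₁.op = coyoneda.map f₂.op :=
      ((Functor.whiskeringLeft C W.Localization (Type (max u v))).obj W.Q).map_injective hw
    have h3 : f₁.op = f₂.op := coyoneda.map_injective h2
    exact Quiver.Hom.op_inj h3

lemma lam_full (adj : lam ⊣ gammaPrime S W h) : lam.Full where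
  map_surjective := by
    intro d d' φ
    let E : ∀ c : C, (d ⟶ W.Q.obj c) ≃ (lam.obj d ⟶ S.Q.obj c) :=
      fun c => eAux S W h lam adj d c
    let E' : ∀ c : C, (d' ⟶ W.Q.obj c) ≃ (lam.obj d' ⟶ S.Q.obj c) :=
      fun c => eAux S W h lam adj d' c
    let β : W.Q ⋙ coyoneda.obj (Opposite.op d') ⟶ W.Q ⋙ coyoneda.obj (Opposite.op d) :=
      { app := fun c => TypeCat.ofHom fun g => (E c).symm (φ ≫ E' c g)
        naturality := by
          intro c c' f
          ext g
          dsimp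
          apply (E c').injective
          rw [Equiv.apply_symm_apply]
          have : ((E c).symm (φ ≫ E' c g)) ≫ W.Q.map f =
              (E c).symm (φ ≫ E' c g) ≫ W.Q.map f := rfl
          rw [show (E c') (((E c).symm (φ ≫ E' c g)) ≫ W.Q.map f) =
              (E c) ((E c).symm (φ ≫ E' c g)) ≫ S.Q.map f from
                eAux_nat S W h lam adj d f _,
            Equiv.apply_symm_apply,
            show (E' c') (g ≫ W.Q.map f) = (E' c) g ≫ S.Q.map f from
              eAux_nat S W h lam adj d' f _]
          simp }
    have := Localization.full_whiskeringLeft W.Q W (Type (max u v))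
    obtain ⟨α, hα⟩ :=
      ((Functor.whiskeringLeft C W.Localization (Type (max u v))).obj W.Q).map_surjective β
    obtain ⟨ψ, hψ⟩ := coyoneda.map_surjective α
    have key : ∀ (c : C) (g : d' ⟶ W.Q.obj c), ψ.unop ≫ g = (E c).symm (φ ≫ E' c g) := by
      intro c g
      have h1 : (coyoneda.map ψ).app (W.Q.obj c) g = ψ.unop ≫ g := rfl
      have h2 := ConcreteCategory.congr_hom (congr_app hα c) g
      rw [← hψ] at h2
      exact h2
    obtain ⟨c₀, hc₀⟩ : ∃ c₀ : C, S.Q.obj c₀ = lam.obj d' :=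
      ⟨(Localization.Construction.objEquiv S).symm (lam.obj d'),
        (Localization.Construction.objEquiv S).apply_symm_apply (lam.obj d')⟩
    refine ⟨ψ.unop, ?_⟩
    set g₀ : d' ⟶ W.Q.obj c₀ := (E' c₀).symm (eqToHom hc₀.symm) with hg₀
    have h1 : (E c₀) (ψ.unop ≫ g₀) = φ ≫ eqToHom hc₀.symm := by
      rw [key c₀ g₀, Equiv.apply_symm_apply, hg₀, Equiv.apply_symm_apply]
    have h2 : (E c₀) (ψ.unop ≫ g₀) = lam.map ψ.unop ≫ eqToHom hc₀.symm := by
      rw [show (E c₀) (ψ.unop ≫ g₀) = lam.map ψ.unop ≫ (E' c₀) g₀ from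
        eAux_comp S W h lam adj ψ.unop g₀, hg₀, Equiv.apply_symm_apply]
    exact (cancel_mono (eqToHom hc₀.symm)).1 (h2.symm.trans h1)

end FF

/-- If the localisation functor `γ' : C[S⁻¹] ⥤ C[W⁻¹]` admits a left adjoint `λ`, then
`(C, S, W)` is a left Cartan-Eilenberg category: for each object `X`, the counit
`ε'_X : λγ'(X) ⟶ X` exhibits `λγ'(X)` as a cofibrant left model of `X` (its source is
cofibrant and it becomes an isomorphism in `C[W⁻¹]`). -/
theorem leftCE_of_left_adjoint (S W : MorphismProperty C) (hsw : StrongWeak S W)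
    (lam : W.Localization ⥤ S.Localization)
    (adj : lam ⊣ gammaPrime S W hsw.le_sat) :
    ∀ X : C,
      CofibrantLoc S W (lam.obj ((gammaPrime S W hsw.le_sat).obj (S.Q.obj X))) ∧
      IsIso ((gammaPrime S W hsw.le_sat).map (adj.counit.app (S.Q.obj X))) := by
  intro X
  have hfull : lam.Full := lam_full S W hsw.le_sat lam adj
  have hfaith : lam.Faithful := lam_faithful S W hsw.le_sat lam adj
  refine ⟨?_, ?_⟩
  · intro Y X' w hw
    haveI hiso : IsIso ((gammaPrime S W hsw.le_sat).map (S.Q.map w)) :=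
      gamma_map_isIso S W hsw.le_sat w hw
    constructor
    · intro g₁ g₂ hg
      simp only at hg
      apply (adj.homEquiv _ (S.Q.obj Y)).injective
      have h2 := congrArg (adj.homEquiv _ (S.Q.obj X')) hg
      rw [adj.homEquiv_naturality_right, adj.homEquiv_naturality_right] at h2
      exact (cancel_mono ((gammaPrime S W hsw.le_sat).map (S.Q.map w))).1 h2
    · intro t
      refine ⟨(adj.homEquiv _ (S.Q.obj Y)).symm
        ((adj.homEquiv _ (S.Q.obj X')) t ≫ inv ((gammaPrime S W hsw.le_sat).map (S.Q.map w))), ?_⟩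
      apply (adj.homEquiv _ (S.Q.obj X')).injective
      simp only
      rw [adj.homEquiv_naturality_right, Equiv.apply_symm_apply]
      simp
  · exact inferInstance
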